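/- For every integer k ≥ 3 and every prime D ≥ 3, one has Ψ_k^2(D) ≤ 8π^{3/2} · (2π/D)^{k−1} · ζ(k − 1/2)² / Γ(k − 1/2), where ζ is the Riemann zeta function and Γ is the Gamma function. -/

import Mathlib

/-- The J-Bessel function `J_ν(x)`, defined for real `ν ≥ 0` and `x > 0` by
`J_ν(x) = (2(x/2)^ν / (Γ(ν+1/2)Γ(1/2))) ∫_0^{π/2} sin(θ)^{2ν} cos(x cos θ) dθ`. -/
noncomputable def besselJ (ν x : ℝ) : ℝ :=
  2 * (x / 2) ^ ν / (Real.Gamma (ν + 1 / 2) * Real.Gamma (1 / 2)) *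
    ∫ θ in (0 : ℝ)..(Real.pi / 2), Real.sin θ ^ (2 * ν) * Real.cos (x * Real.cos θ)

/-- The Kloosterman sum `S(m, n; c) = Σ_{x ∈ (ℤ/cℤ)ˣ} e((mx + n x̄)/c)`. -/
noncomputable def klSum (m n : ℤ) (c : ℕ) : ℂ :=
  ∑ x ∈ Finset.filter (fun x => Nat.Coprime x c) (Finset.range c),
    Complex.exp (2 * Real.pi * Complex.I *
      ((m : ℂ) * (x : ℂ) + (n : ℂ) * ((((x : ZMod c)⁻¹ : ZMod c).val : ℕ) : ℂ)) / (c : ℂ))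

/-- The twisted Kloosterman sum `S_χ(m, n; c) = Σ_{x ∈ (ℤ/cℤ)ˣ} χ(x mod D) e((mx + n x̄)/c)`
for a Dirichlet character `χ` mod `D`. -/
noncomputable def klSumT {D : ℕ} (χ : DirichletCharacter ℂ D) (m n : ℤ) (c : ℕ) : ℂ :=
  ∑ x ∈ Finset.filter (fun x => Nat.Coprime x c) (Finset.range c),
    χ ((x : ℕ) : ZMod D) * Complex.exp (2 * Real.pi * Complex.I *
      ((m : ℂ) * (x : ℂ) + (n : ℂ) * ((((x : ZMod c)⁻¹ : ZMod c).val : ℕ) : ℂ)) / (c : ℂ))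

/-- The quadratic Dirichlet character mod a prime `D` (the Legendre symbol `(·/D)`),
with values in `ℂ`. -/
noncomputable def omegaChar (D : ℕ) (hD : D.Prime) : DirichletCharacter ℂ D :=
  letI : Fact D.Prime := ⟨hD⟩
  (quadraticChar (ZMod D)).ringHomComp (Int.castRingHom ℂ)

/-- `φ_k(m,n) = δ_{m,n} + 2π i^k Σ_{c > 0, D ∣ c} c⁻¹ S_ω(m,n;c) J_{k-1}(4π√(mn)/c)`. -/
noncomputable def phiK (D : ℕ) (χ : DirichletCharacter ℂ D) (k m n : ℕ) : ℂ :=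
  (if m = n then 1 else 0) +
    2 * Real.pi * Complex.I ^ k *
      ∑' c : {c : ℕ // 0 < c ∧ D ∣ c},
        ((c : ℕ) : ℂ)⁻¹ * klSumT χ m n c *
          ((besselJ ((k : ℝ) - 1) (4 * Real.pi * Real.sqrt ((m : ℝ) * n) / ((c : ℕ) : ℝ)) : ℝ) : ℂ)

/-- `Ψ_k^1(D) = 2π D^{-1/2} Σ_{ℓ ≥ 1, D ∤ ℓ} ℓ^{-1/2} σ₀(ℓ) |J_{k-1}(4π/ℓ)|`. -/
noncomputable def Psi1 (k D : ℕ) : ℝ :=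
  2 * Real.pi * (D : ℝ) ^ (-(1 / 2) : ℝ) *
    ∑' ℓ : {ℓ : ℕ // 0 < ℓ ∧ ¬ D ∣ ℓ},
      ((ℓ : ℕ) : ℝ) ^ (-(1 / 2) : ℝ) * ((ℓ : ℕ).divisors.card : ℝ) *
        |besselJ ((k : ℝ) - 1) (4 * Real.pi / ((ℓ : ℕ) : ℝ))|

/-- `Ψ_k^2(D) = 2π Σ_{m ≥ 1} (Dm)^{-1/2} (√D σ₀(Dm) + σ₀(D²m)) |J_{k-1}(4π/(Dm))|`. -/
noncomputable def Psi2 (k D : ℕ) : ℝ :=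
  2 * Real.pi *
    ∑' m : ℕ+,
      ((D : ℝ) * (m : ℕ)) ^ (-(1 / 2) : ℝ) *
        (Real.sqrt D * (((D * (m : ℕ)).divisors.card : ℝ)) + ((D ^ 2 * (m : ℕ)).divisors.card : ℝ)) *
        |besselJ ((k : ℝ) - 1) (4 * Real.pi / ((D : ℝ) * (m : ℕ)))|

/-- The Riemann zeta function at a real argument. -/
noncomputable def zetaR (s : ℝ) : ℝ := (riemannZeta (s : ℂ)).re

section AuxPsi2

lemma besselJ_abs_le {nu x : ℝ} (hnu : 0 ≤ nu) (hx : 0 < x) :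
    |besselJ nu x| ≤ Real.sqrt Real.pi / Real.Gamma (nu + 1 / 2) * (x / 2) ^ nu := by
  have hG : 0 < Real.Gamma (nu + 1 / 2) := Real.Gamma_pos_of_pos (by linarith)
  have hsp : 0 < Real.sqrt Real.pi := Real.sqrt_pos.mpr Real.pi_pos
  have hxp : (0:ℝ) ≤ (x / 2) ^ nu := Real.rpow_nonneg (by linarith) _
  have hI : ‖∫ θ in (0:ℝ)..(Real.pi/2), Real.sin θ ^ (2*nu) * Real.cos (x * Real.cos θ)‖
      ≤ 1 * |Real.pi/2 - 0| := by
    apply intervalIntegral.norm_integral_le_of_norm_le_const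
    intro θ hθ
    rw [Set.uIoc_of_le (by positivity)] at hθ
    have h1 : 0 ≤ Real.sin θ :=
      Real.sin_nonneg_of_nonneg_of_le_pi hθ.1.le (by linarith [hθ.2, Real.pi_pos])
    have h2 : Real.sin θ ^ (2*nu) ≤ 1 :=
      Real.rpow_le_one h1 (Real.sin_le_one θ) (by linarith)
    have h3 : |Real.cos (x * Real.cos θ)| ≤ 1 := Real.abs_cos_le_one _
    have h4 : (0:ℝ) ≤ Real.sin θ ^ (2*nu) := Real.rpow_nonneg h1 _
    calc ‖Real.sin θ ^ (2*nu) * Real.cos (x * Real.cos θ)‖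
        = Real.sin θ ^ (2*nu) * |Real.cos (x * Real.cos θ)| := by
          rw [Real.norm_eq_abs, abs_mul, abs_of_nonneg h4]
      _ ≤ 1 * 1 := mul_le_mul h2 h3 (abs_nonneg _) one_pos.le
      _ = 1 := one_mul 1
  have hpp : Real.sqrt Real.pi * Real.sqrt Real.pi = Real.pi :=
    Real.mul_self_sqrt Real.pi_pos.le
  rw [besselJ, Real.Gamma_one_half_eq, abs_mul,
    abs_of_nonneg (by positivity :
      (0:ℝ) ≤ 2 * (x/2) ^ nu / (Real.Gamma (nu+1/2) * Real.sqrt Real.pi))]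
  set A : ℝ := (x/2) ^ nu with hA
  set G : ℝ := Real.Gamma (nu + 1/2) with hGdef
  set S : ℝ := Real.sqrt Real.pi with hS
  calc 2 * A / (G * S) *
        |∫ θ in (0:ℝ)..(Real.pi/2), Real.sin θ ^ (2*nu) * Real.cos (x * Real.cos θ)|
      ≤ 2 * A / (G * S) * (1 * |Real.pi/2 - 0|) := by
        apply mul_le_mul_of_nonneg_left _ (by positivity)
        simpa [Real.norm_eq_abs] using hI
    _ = S / G * A := by
        rw [sub_zero, one_mul, abs_of_nonneg (by positivity : (0:ℝ) ≤ Real.pi/2)]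
        have hS0 : S ≠ 0 := ne_of_gt hsp
        have hG0 : G ≠ 0 := ne_of_gt hG
        rw [← hpp]
        field_simp

lemma card_divisors_prime_pow_mul_le {D m : ℕ} (hD : D.Prime) (hm : m ≠ 0) (j : ℕ) :
    ((D ^ j * m).divisors.card) ≤ (j + 1) * m.divisors.card := by
  have hcd : ∀ i : ℕ, ((D ^ i : ℕ).divisors.card) = i + 1 := fun i => by
    rw [← ArithmeticFunction.sigma_zero_apply, ArithmeticFunction.sigma_zero_apply_prime_pow hD]
  set a := m.factorization D with ha
  set t := m / D ^ a with ht
  have hmt : D ^ a * t = m := Nat.ordProj_mul_ordCompl_eq_self m D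
  have hco : Nat.Coprime D t := Nat.coprime_ordCompl hD hm
  have h1 : D ^ j * m = D ^ (j + a) * t := by rw [← hmt]; ring
  rw [h1, Nat.Coprime.card_divisors_mul (Nat.Coprime.pow_left _ hco), ← hmt,
    Nat.Coprime.card_divisors_mul (Nat.Coprime.pow_left _ hco), hcd, hcd]
  calc (j + a + 1) * t.divisors.card ≤ ((j+1)*(a+1)) * t.divisors.card := by
        apply Nat.mul_le_mul_right
        calc j + a + 1 ≤ j*a + (j + a + 1) := Nat.le_add_left _ _
          _ = (j+1)*(a+1) := by ring
    _ = (j+1)*((a+1)*t.divisors.card) := by ring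

lemma hasSum_zetaR {s : ℝ} (hs : 1 < s) :
    HasSum (fun n : ℕ => (n : ℝ) ^ (-s)) (zetaR s) := by
  have hsum : Summable (fun n : ℕ => (n : ℝ) ^ (-s)) := by
    rw [Real.summable_nat_rpow]; linarith
  have h1 : riemannZeta (s : ℂ) = ((∑' n : ℕ, (n : ℝ) ^ (-s) : ℝ) : ℂ) := by
    rw [zeta_eq_tsum_one_div_nat_cpow (by simpa using hs), Complex.ofReal_tsum]
    congr 1
    funext n
    rw [Complex.ofReal_cpow (Nat.cast_nonneg n)]
    push_cast
    rw [Complex.cpow_neg, one_div]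
  have h2 : zetaR s = ∑' n : ℕ, (n : ℝ) ^ (-s) := by
    rw [zetaR, h1, Complex.ofReal_re]
  rw [h2]
  exact hsum.hasSum

set_option maxHeartbeats 1000000 in
lemma hasSum_sigma_rpow {s : ℝ} (hs : 1 < s) :
    HasSum (fun n : ℕ => ((n.divisors.card : ℝ)) * (n : ℝ) ^ (-s)) (zetaR s * zetaR s) := by
  have hZ := hasSum_zetaR hs
  have hnorm : Summable (fun n : ℕ => ‖(n : ℝ) ^ (-s)‖) := by
    simpa [Real.norm_eq_abs, abs_of_nonneg (Real.rpow_nonneg (Nat.cast_nonneg _) _)]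
      using hZ.summable
  have hmul : HasSum (fun p : ℕ × ℕ => (p.1 : ℝ) ^ (-s) * (p.2 : ℝ) ^ (-s))
      (zetaR s * zetaR s) :=
    hZ.mul hZ (summable_mul_of_summable_norm hnorm hnorm)
  have key := hmul.tsum_fiberwise (fun p : ℕ × ℕ => p.1 * p.2)
  have hfib : (fun n : ℕ => ∑' p : (fun p : ℕ × ℕ => p.1 * p.2) ⁻¹' {n},
      ((p : ℕ × ℕ).1 : ℝ) ^ (-s) * ((p : ℕ × ℕ).2 : ℝ) ^ (-s))
      = fun n : ℕ => ((n.divisors.card : ℝ)) * (n : ℝ) ^ (-s) := by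
    funext n
    rcases eq_or_ne n 0 with rfl | hn
    · have hz : ∀ p : (fun p : ℕ × ℕ => p.1 * p.2) ⁻¹' {(0:ℕ)},
          ((p : ℕ × ℕ).1 : ℝ) ^ (-s) * ((p : ℕ × ℕ).2 : ℝ) ^ (-s) = 0 := by
        rintro ⟨⟨p₁, p₂⟩, hp⟩
        simp only [Set.mem_preimage, Set.mem_singleton_iff, Nat.mul_eq_zero] at hp
        rcases hp with rfl | rfl <;>
          simp [Real.zero_rpow (by linarith : -s ≠ 0)]
      rw [tsum_congr hz, tsum_zero]
      simp
    · have hset : (fun p : ℕ × ℕ => p.1 * p.2) ⁻¹' {n} = ↑n.divisorsAntidiagonal := by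
        ext p
        simp [Nat.mem_divisorsAntidiagonal, hn]
      have hterm : ∀ p ∈ n.divisorsAntidiagonal,
          ((p.1 : ℝ) ^ (-s) * (p.2 : ℝ) ^ (-s)) = (n : ℝ) ^ (-s) := by
        intro p hp
        obtain ⟨h1, -⟩ := Nat.mem_divisorsAntidiagonal.mp hp
        rw [← h1]
        push_cast
        rw [Real.mul_rpow (Nat.cast_nonneg _) (Nat.cast_nonneg _)]
      rw [hset, Finset.tsum_subtype' n.divisorsAntidiagonal
          (fun p => (p.1 : ℝ) ^ (-s) * (p.2 : ℝ) ^ (-s)),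
        Finset.sum_congr rfl hterm, Finset.sum_const,
        ← Nat.map_div_right_divisors, Finset.card_map, nsmul_eq_mul]
  rw [hfib] at key
  exact key

end AuxPsi2

set_option maxHeartbeats 2000000 in
/-- For every integer `k ≥ 3` and prime `D ≥ 3`:
`Ψ_k^2(D) ≤ 8 π^{3/2} (2π/D)^{k−1} ζ(k−1/2)² / Γ(k−1/2)`. -/
theorem Psi2_le (k D : ℕ) (hk : 3 ≤ k) (hD : D.Prime) (hD3 : 3 ≤ D) :
    Psi2 k D ≤ 8 * Real.pi ^ ((3 : ℝ) / 2) * (2 * Real.pi / (D : ℝ)) ^ (k - 1) *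
      zetaR ((k : ℝ) - 1 / 2) ^ 2 / Real.Gamma ((k : ℝ) - 1 / 2) := by
  
  have hk3 : (3:ℝ) ≤ (k:ℝ) := by exact_mod_cast hk
  have hD3' : (3:ℝ) ≤ (D:ℝ) := by exact_mod_cast hD3
  have hD0 : (0:ℝ) < (D:ℝ) := by linarith
  have hπ := Real.pi_pos
  set ν : ℝ := (k:ℝ) - 1 with hνdef
  set s : ℝ := (k:ℝ) - 1/2 with hsdef
  have hs1 : (1:ℝ) < s := by rw [hsdef]; linarith
  have hν0 : (0:ℝ) ≤ ν := by rw [hνdef]; linarith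
  have hνs : ν + 1/2 = s := by rw [hνdef, hsdef]; ring
  have hΓ : 0 < Real.Gamma s := Real.Gamma_pos_of_pos (by linarith)
  have hsπ : 0 < Real.sqrt Real.pi := Real.sqrt_pos.mpr hπ
  have hνnat : ν = ((k-1 : ℕ) : ℝ) := by
    rw [Nat.cast_sub (by omega)]; rw [hνdef]; norm_num
  set P : ℝ := (2 * Real.pi / (D:ℝ)) ^ (k - 1) with hP
  have hP0 : (0:ℝ) ≤ P := by positivity
  set C : ℝ := 4 * (Real.sqrt Real.pi / Real.Gamma s) * P with hC
  have hC0 : (0:ℝ) ≤ C := by positivity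
  have hσ := hasSum_sigma_rpow hs1
  set Z : ℝ := zetaR s with hZdef
  -- the majorant on ℕ+
  have hbase : Summable (fun m : ℕ+ => (((m:ℕ).divisors.card : ℝ) * ((m:ℕ):ℝ) ^ (-s))) :=
    hσ.summable.comp_injective PNat.coe_injective
  have hhsum : Summable (fun m : ℕ+ =>
      C * (((m:ℕ).divisors.card : ℝ) * ((m:ℕ):ℝ) ^ (-s))) := hbase.mul_left C
  -- pointwise bound
  have hpt : ∀ m : ℕ+,
      ((D : ℝ) * ((m:ℕ):ℝ)) ^ (-(1 / 2) : ℝ) *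
        (Real.sqrt (D:ℕ) * (((D * (m : ℕ)).divisors.card : ℝ)) +
          (((D ^ 2 * (m : ℕ)).divisors.card : ℝ))) *
        |besselJ ((k : ℝ) - 1) (4 * Real.pi / ((D : ℝ) * ((m:ℕ):ℝ)))|
      ≤ C * (((m:ℕ).divisors.card : ℝ) * ((m:ℕ):ℝ) ^ (-s)) := by
    intro m
    set M : ℝ := ((m:ℕ):ℝ) with hM
    have hM1 : (1:ℝ) ≤ M := by
      rw [hM]; exact_mod_cast m.property
    have hM0 : (0:ℝ) < M := by linarith
    have hm0 : (m:ℕ) ≠ 0 := m.property.ne'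
    set sg : ℝ := ((m:ℕ).divisors.card : ℝ) with hsg
    have hsg0 : (0:ℝ) ≤ sg := by rw [hsg]; positivity
    have hAle : ((D * (m:ℕ)).divisors.card : ℝ) ≤ 2 * sg := by
      have := card_divisors_prime_pow_mul_le hD hm0 1
      rw [pow_one] at this
      rw [hsg]; exact_mod_cast this
    have hBle : ((D^2 * (m:ℕ)).divisors.card : ℝ) ≤ 3 * sg := by
      have := card_divisors_prime_pow_mul_le hD hm0 2
      rw [hsg]; exact_mod_cast this
    have hsD : Real.sqrt (D:ℝ) * Real.sqrt (D:ℝ) = (D:ℝ) := Real.mul_self_sqrt hD0.le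
    have hsD0 : 0 < Real.sqrt (D:ℝ) := Real.sqrt_pos.mpr hD0
    have hsD32 : (3:ℝ)/2 ≤ Real.sqrt (D:ℝ) := by
      nlinarith [hsD, hsD0]
    have hBr : ((D : ℝ) * M) ^ (-(1 / 2) : ℝ) *
        (Real.sqrt (D:ℕ) * (((D * (m : ℕ)).divisors.card : ℝ)) +
          (((D ^ 2 * (m : ℕ)).divisors.card : ℝ)))
        ≤ 4 * sg * M ^ (-(1/2):ℝ) := by
      have hDr : ((D:ℝ)) ^ (-(1/2):ℝ) = (Real.sqrt (D:ℝ))⁻¹ := by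
        rw [Real.rpow_neg hD0.le, ← Real.sqrt_eq_rpow]
      have hstep : Real.sqrt (D:ℝ) * (((D * (m : ℕ)).divisors.card : ℝ)) +
          (((D ^ 2 * (m : ℕ)).divisors.card : ℝ)) ≤ Real.sqrt (D:ℝ) * (4 * sg) := by
        nlinarith [hAle, hBle, hsg0, hsD32]
      rw [Real.mul_rpow hD0.le hM0.le, hDr]
      calc (Real.sqrt (D:ℝ))⁻¹ * M ^ (-(1/2):ℝ) *
            (Real.sqrt (D:ℕ) * (((D * (m : ℕ)).divisors.card : ℝ)) +
              (((D ^ 2 * (m : ℕ)).divisors.card : ℝ)))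
          = M ^ (-(1/2):ℝ) * ((Real.sqrt (D:ℝ))⁻¹ *
            (Real.sqrt (D:ℕ) * (((D * (m : ℕ)).divisors.card : ℝ)) +
              (((D ^ 2 * (m : ℕ)).divisors.card : ℝ)))) := by ring
        _ ≤ M ^ (-(1/2):ℝ) * (4 * sg) := by
            apply mul_le_mul_of_nonneg_left _ (Real.rpow_nonneg hM0.le _)
            rw [inv_mul_le_iff₀ hsD0]
            exact hstep
        _ = 4 * sg * M ^ (-(1/2):ℝ) := by ring
    have hx : 0 < 4 * Real.pi / ((D:ℝ) * M) := by positivity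
    have hJ0 := besselJ_abs_le hν0 hx
    have hx2 : (4 * Real.pi / ((D:ℝ) * M)) / 2 = (2 * Real.pi / (D:ℝ)) * M⁻¹ := by
      field_simp
      ring
    have hpow : ((2 * Real.pi / (D:ℝ)) * M⁻¹) ^ ν = P * M ^ (-ν) := by
      rw [Real.mul_rpow (by positivity) (by positivity), Real.inv_rpow hM0.le,
        ← Real.rpow_neg hM0.le, hP, hνnat, Real.rpow_natCast]
    have hJ : |besselJ ν (4 * Real.pi / ((D:ℝ) * M))| ≤
        Real.sqrt Real.pi / Real.Gamma s * (P * M ^ (-ν)) := by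
      calc |besselJ ν (4 * Real.pi / ((D:ℝ) * M))|
          ≤ Real.sqrt Real.pi / Real.Gamma (ν + 1/2) * ((4 * Real.pi / ((D:ℝ) * M)) / 2) ^ ν :=
            hJ0
        _ = Real.sqrt Real.pi / Real.Gamma s * (P * M ^ (-ν)) := by rw [hx2, hpow, hνs]
    have hMs : M ^ (-(1/2):ℝ) * M ^ (-ν) = M ^ (-s) := by
      rw [← Real.rpow_add hM0]
      congr 1
      rw [hνdef, hsdef]; ring
    calc ((D : ℝ) * M) ^ (-(1 / 2) : ℝ) *
          (Real.sqrt (D:ℕ) * (((D * (m : ℕ)).divisors.card : ℝ)) +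
            (((D ^ 2 * (m : ℕ)).divisors.card : ℝ))) *
          |besselJ ν (4 * Real.pi / ((D : ℝ) * M))|
        ≤ (4 * sg * M ^ (-(1/2):ℝ)) *
            (Real.sqrt Real.pi / Real.Gamma s * (P * M ^ (-ν))) :=
          mul_le_mul hBr hJ (abs_nonneg _) (by positivity)
      _ = C * (sg * (M ^ (-(1/2):ℝ) * M ^ (-ν))) := by rw [hC]; ring
      _ = C * (sg * M ^ (-s)) := by rw [hMs]
  -- summability of the left series
  have hFs : Summable (fun m : ℕ+ =>
      ((D : ℝ) * ((m:ℕ):ℝ)) ^ (-(1 / 2) : ℝ) *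
        (Real.sqrt (D:ℕ) * (((D * (m : ℕ)).divisors.card : ℝ)) +
          (((D ^ 2 * (m : ℕ)).divisors.card : ℝ))) *
        |besselJ ((k : ℝ) - 1) (4 * Real.pi / ((D : ℝ) * ((m:ℕ):ℝ)))|) := by
    apply Summable.of_nonneg_of_le (fun m => by positivity) hpt hhsum
  have hle1 : ∑' m : ℕ+,
      ((D : ℝ) * ((m:ℕ):ℝ)) ^ (-(1 / 2) : ℝ) *
        (Real.sqrt (D:ℕ) * (((D * (m : ℕ)).divisors.card : ℝ)) +
          (((D ^ 2 * (m : ℕ)).divisors.card : ℝ))) *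
        |besselJ ((k : ℝ) - 1) (4 * Real.pi / ((D : ℝ) * ((m:ℕ):ℝ)))|
      ≤ ∑' m : ℕ+, C * (((m:ℕ).divisors.card : ℝ) * ((m:ℕ):ℝ) ^ (-s)) :=
    Summable.tsum_le_tsum hpt hFs hhsum
  have hle2 : ∑' m : ℕ+, C * (((m:ℕ).divisors.card : ℝ) * ((m:ℕ):ℝ) ^ (-s))
      = C * ∑' m : ℕ+, (((m:ℕ).divisors.card : ℝ) * ((m:ℕ):ℝ) ^ (-s)) := tsum_mul_left
  have hle3 : ∑' m : ℕ+, (((m:ℕ).divisors.card : ℝ) * ((m:ℕ):ℝ) ^ (-s)) ≤ Z * Z := by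
    calc ∑' m : ℕ+, (((m:ℕ).divisors.card : ℝ) * ((m:ℕ):ℝ) ^ (-s))
        ≤ ∑' n : ℕ, ((n.divisors.card : ℝ) * (n:ℝ) ^ (-s)) :=
          Summable.tsum_le_tsum_of_inj ((↑·) : ℕ+ → ℕ) PNat.coe_injective
            (fun n _ => by positivity) (fun m => le_rfl) hbase hσ.summable
      _ = Z * Z := hσ.tsum_eq
  have hπ32 : Real.pi ^ ((3:ℝ)/2) = Real.pi * Real.sqrt Real.pi := by
    rw [show (3:ℝ)/2 = 1 + 1/2 by norm_num, Real.rpow_add hπ, Real.rpow_one,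
      ← Real.sqrt_eq_rpow]
  unfold Psi2
  calc 2 * Real.pi * ∑' m : ℕ+,
        ((D : ℝ) * ((m:ℕ):ℝ)) ^ (-(1 / 2) : ℝ) *
          (Real.sqrt (D:ℕ) * (((D * (m : ℕ)).divisors.card : ℝ)) +
            (((D ^ 2 * (m : ℕ)).divisors.card : ℝ))) *
          |besselJ ((k : ℝ) - 1) (4 * Real.pi / ((D : ℝ) * ((m:ℕ):ℝ)))|
      ≤ 2 * Real.pi * (C * (Z * Z)) := by
        apply mul_le_mul_of_nonneg_left _ (by positivity)
        refine le_trans hle1 ?_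
        rw [hle2]
        exact mul_le_mul_of_nonneg_left hle3 hC0
    _ = 8 * Real.pi ^ ((3:ℝ)/2) * P * Z ^ 2 / Real.Gamma s := by
        rw [hπ32, hC]
        ring
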